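/- (Flat Quadrilateral construction of interpolated parallel segments) Let X be a CAT(0) space and let Q₀, Q₁, P₀, P₁ ∈ X with d(Q₀, P₀) = d(Q₁, P₁) = L, and suppose the geodesic segments t ↦ (1−t)Q₀ + tP₀ and t ↦ (1−t)Q₁ + tP₁ are parallel, i.e., d((1−t)Q₀ + tP₀, (1−t)Q₁ + tP₁) = d(Q₀, Q₁) for all t ∈ [0,1]. For s ∈ [0,1] set Q_s = (1−s)Q₀ + sQ₁ and P_s = (1−s)P₀ + sP₁. Then for each s, d(Q_s, P_s) = L, and the segments t ↦ (1−t)Q_s + tP_s are pairwise parallel: d((1−t)Q_s + tP_s, (1−t)Q_{s'} + tP_{s'}) = d(Q_s, Q_{s'}) for all t, s, s' ∈ [0,1]. -/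

import Mathlib

section Aux
variable {X : Type*} [MetricSpace X]
variable {I : X → X → ℝ → X}
variable (h0 : ∀ P Q, I P Q 0 = P) (h1 : ∀ P Q, I P Q 1 = Q)
variable (hgeo : ∀ P Q, ∀ s ∈ Set.Icc (0:ℝ) 1, ∀ t ∈ Set.Icc (0:ℝ) 1,
    dist (I P Q s) (I P Q t) = |s - t| * dist P Q)
variable (hNPC : ∀ P Q R, ∀ s ∈ Set.Icc (0:ℝ) 1,
    dist (I P Q s) R ^ 2 ≤
      (1 - s) * dist P R ^ 2 + s * dist Q R ^ 2 - s * (1 - s) * dist P Q ^ 2)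

private lemma le_of_sq_le' {a b : ℝ} (ha : 0 ≤ a) (hb : 0 ≤ b) (h : a ^ 2 ≤ b ^ 2) : a ≤ b := by
  nlinarith

private lemma combo_mem {a b l : ℝ} (ha : a ∈ Set.Icc (0:ℝ) 1) (hb : b ∈ Set.Icc (0:ℝ) 1)
    (hl : l ∈ Set.Icc (0:ℝ) 1) : (1 - l) * a + l * b ∈ Set.Icc (0:ℝ) 1 := by
  obtain ⟨ha0, ha1⟩ := ha; obtain ⟨hb0, hb1⟩ := hb; obtain ⟨hl0, hl1⟩ := hl
  constructor <;> nlinarith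

include h0 hgeo in
private lemma dist_start (A B : X) {s : ℝ} (hs : s ∈ Set.Icc (0:ℝ) 1) :
    dist A (I A B s) = s * dist A B := by
  have h := hgeo A B 0 (by norm_num) s hs
  rw [h0] at h
  rw [h, abs_sub_comm, abs_of_nonneg (by simpa using hs.1)]
  ring

include h1 hgeo in
private lemma dist_end (A B : X) {s : ℝ} (hs : s ∈ Set.Icc (0:ℝ) 1) :
    dist (I A B s) B = (1 - s) * dist A B := by
  have h := hgeo A B s hs 1 (by norm_num)
  rw [h1] at h
  rw [h, abs_of_nonpos (by linarith [hs.2])]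
  ring

include hNPC in
private lemma uniq {A B x : X} {s : ℝ} (hs : s ∈ Set.Icc (0:ℝ) 1)
    (hA : dist A x = s * dist A B) (hB : dist x B = (1 - s) * dist A B) :
    I A B s = x := by
  have h := hNPC A B x s hs
  rw [hA, dist_comm B x, hB] at h
  have h2 : dist (I A B s) x ^ 2 ≤ 0 := by nlinarith
  have h3 : dist (I A B s) x = 0 := by nlinarith [dist_nonneg (x := I A B s) (y := x)]
  exact dist_eq_zero.mp h3

include h0 h1 hgeo hNPC in
private lemma interp_interp (A B : X) {a b l : ℝ} (ha : a ∈ Set.Icc (0:ℝ) 1)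
    (hb : b ∈ Set.Icc (0:ℝ) 1) (hl : l ∈ Set.Icc (0:ℝ) 1) :
    I (I A B a) (I A B b) l = I A B ((1 - l) * a + l * b) := by
  have hτ : (1 - l) * a + l * b ∈ Set.Icc (0:ℝ) 1 := combo_mem ha hb hl
  apply uniq hNPC hl
  · rw [hgeo A B a ha ((1 - l) * a + l * b) hτ, hgeo A B a ha b hb]
    have : |a - ((1 - l) * a + l * b)| = l * |a - b| := by
      rw [show a - ((1 - l) * a + l * b) = l * (a - b) by ring, abs_mul,
        abs_of_nonneg hl.1]
    rw [this]; ring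
  · rw [hgeo A B ((1 - l) * a + l * b) hτ b hb, hgeo A B a ha b hb]
    have : |(1 - l) * a + l * b - b| = (1 - l) * |a - b| := by
      rw [show (1 - l) * a + l * b - b = (1 - l) * (a - b) by ring, abs_mul,
        abs_of_nonneg (by linarith [hl.2])]
    rw [this]; ring

include h0 h1 hgeo hNPC in
private lemma interp_symm (A B : X) {s : ℝ} (hs : s ∈ Set.Icc (0:ℝ) 1) :
    I A B s = I B A (1 - s) := by
  have hs' : 1 - s ∈ Set.Icc (0:ℝ) 1 := ⟨by linarith [hs.2], by linarith [hs.1]⟩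
  refine (uniq hNPC hs' ?_ ?_).symm
  · rw [dist_comm B (I A B s), dist_end h1 hgeo A B hs, dist_comm A B]
  · rw [dist_comm (I A B s) A, dist_start h0 hgeo A B hs, dist_comm A B]
    ring_nf

include h0 h1 hgeo hNPC in
private lemma contract_start (A B C : X) {l : ℝ} (hl : l ∈ Set.Icc (0:ℝ) 1) :
    dist (I A B l) (I A C l) ≤ l * dist B C := by
  have h1' := hNPC A C (I A B l) l hl
  have h2' := hNPC A B C l hl
  have h3 : dist A (I A B l) = l * dist A B := dist_start h0 hgeo A B hl
  rw [dist_comm C (I A B l), h3] at h1'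
  have hsq : dist (I A B l) (I A C l) ^ 2 ≤ (l * dist B C) ^ 2 := by
    rw [dist_comm (I A B l) (I A C l)]
    nlinarith [mul_le_mul_of_nonneg_left h2' hl.1, h1']
  exact le_of_sq_le' dist_nonneg (mul_nonneg hl.1 dist_nonneg) hsq

include h0 h1 hgeo hNPC in
private lemma contract_end (A B C : X) {l : ℝ} (hl : l ∈ Set.Icc (0:ℝ) 1) :
    dist (I A C l) (I B C l) ≤ (1 - l) * dist A B := by
  have hl' : 1 - l ∈ Set.Icc (0:ℝ) 1 := ⟨by linarith [hl.2], by linarith [hl.1]⟩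
  rw [interp_symm h0 h1 hgeo hNPC A C hl, interp_symm h0 h1 hgeo hNPC B C hl]
  exact contract_start h0 h1 hgeo hNPC C A B hl'

include h0 h1 hgeo hNPC in
private lemma joint_contract (A B A' B' : X) {l : ℝ} (hl : l ∈ Set.Icc (0:ℝ) 1) :
    dist (I A B l) (I A' B' l) ≤ (1 - l) * dist A A' + l * dist B B' := by
  calc dist (I A B l) (I A' B' l)
      ≤ dist (I A B l) (I A B' l) + dist (I A B' l) (I A' B' l) := dist_triangle _ _ _
    _ ≤ l * dist B B' + (1 - l) * dist A A' := by
        gcongr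
        · exact contract_start h0 h1 hgeo hNPC A B B' hl
        · exact contract_end h0 h1 hgeo hNPC A A' B' hl
    _ = (1 - l) * dist A A' + l * dist B B' := by ring


include hNPC in
private lemma ext_step (x0 x1 x2 x3 : X) {r : ℝ} (hr : 0 ≤ r)
    (d01 : dist x0 x1 = r) (d12 : dist x1 x2 = r) (d23 : dist x2 x3 = r)
    (d02 : dist x0 x2 = 2 * r) (d13 : dist x1 x3 = 2 * r)
    (dle : dist x0 x3 ≤ 3 * r) : dist x0 x3 = 3 * r := by
  have hmid : I x1 x3 (1/2) = x2 :=
    uniq hNPC (by norm_num) (by rw [d12, d13]; ring) (by rw [d23, d13]; ring)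
  have hN := hNPC x1 x3 x0 (1/2) (by norm_num)
  rw [hmid, d13, dist_comm x2 x0, d02, dist_comm x1 x0, d01, dist_comm x3 x0] at hN
  refine le_antisymm dle (le_of_sq_le' (by linarith) dist_nonneg ?_)
  nlinarith [hN]

section Strip
variable (g0 g1 : ℝ → X) (L D : ℝ)
variable (hg0d : ∀ a ∈ Set.Icc (0:ℝ) 1, ∀ b ∈ Set.Icc (0:ℝ) 1, dist (g0 a) (g0 b) = |a - b| * L)
variable (hg1d : ∀ a ∈ Set.Icc (0:ℝ) 1, ∀ b ∈ Set.Icc (0:ℝ) 1, dist (g1 a) (g1 b) = |a - b| * L)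
variable (hg0i : ∀ a ∈ Set.Icc (0:ℝ) 1, ∀ b ∈ Set.Icc (0:ℝ) 1, ∀ l ∈ Set.Icc (0:ℝ) 1,
    I (g0 a) (g0 b) l = g0 ((1 - l) * a + l * b))
variable (hg1i : ∀ a ∈ Set.Icc (0:ℝ) 1, ∀ b ∈ Set.Icc (0:ℝ) 1, ∀ l ∈ Set.Icc (0:ℝ) 1,
    I (g1 a) (g1 b) l = g1 ((1 - l) * a + l * b))
variable (hparD : ∀ t ∈ Set.Icc (0:ℝ) 1, dist (g0 t) (g1 t) = D)

-- quadrilateral inequality (upper bound on sum of squared diagonals)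
include hNPC hg0d hg1d hparD in
private lemma S1 {a b : ℝ} (ha : a ∈ Set.Icc (0:ℝ) 1) (hb : b ∈ Set.Icc (0:ℝ) 1)
    (hab : a ≤ b) :
    dist (g0 a) (g1 b) ^ 2 + dist (g1 a) (g0 b) ^ 2 ≤ 2 * D ^ 2 + 2 * (b - a) ^ 2 * L ^ 2 := by
  have hmem : (1/2 : ℝ) ∈ Set.Icc (0:ℝ) 1 := by norm_num
  have h1' := hNPC (g0 a) (g1 b) (g1 a) (1/2) hmem
  have h2' := hNPC (g0 a) (g1 b) (g0 b) (1/2) hmem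
  have e0a : dist (g0 a) (g1 a) = D := hparD a ha
  have e1b : dist (g1 b) (g1 a) = (b - a) * L := by
    rw [hg1d b hb a ha, abs_of_nonneg (by linarith)]
  have e2b : dist (g0 a) (g0 b) = (b - a) * L := by
    rw [hg0d a ha b hb, abs_of_nonpos (by linarith), neg_sub]
  have e3b : dist (g1 b) (g0 b) = D := by rw [dist_comm]; exact hparD b hb
  rw [e0a, e1b] at h1'
  rw [e2b, e3b] at h2'
  have htri : dist (g1 a) (g0 b) ≤ dist (g1 a) (I (g0 a) (g1 b) (1/2))
      + dist (I (g0 a) (g1 b) (1/2)) (g0 b) := dist_triangle _ _ _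
  rw [dist_comm (g1 a) (I (g0 a) (g1 b) (1/2))] at htri
  nlinarith [dist_nonneg (x := g1 a) (y := g0 b),
    dist_nonneg (x := I (g0 a) (g1 b) (1/2)) (y := g1 a),
    dist_nonneg (x := I (g0 a) (g1 b) (1/2)) (y := g0 b),
    sq_nonneg (dist (I (g0 a) (g1 b) (1/2)) (g1 a) - dist (I (g0 a) (g1 b) (1/2)) (g0 b))]

-- the three NPC inequalities of the asymmetric chain
include hNPC hg0d hg1d hg0i hg1i hparD in
private lemma chain {a b l : ℝ} (ha : a ∈ Set.Icc (0:ℝ) 1) (hb : b ∈ Set.Icc (0:ℝ) 1)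
    (hab : a ≤ b) (hl : l ∈ Set.Icc (0:ℝ) 1) :
    D ^ 2 ≤ (1 - l) * dist (g0 a) (g1 ((1 - l) * a + l * b)) ^ 2
        + l * dist (g0 b) (g1 ((1 - l) * a + l * b)) ^ 2 - l * (1 - l) * (b - a) ^ 2 * L ^ 2
      ∧ dist (g0 a) (g1 ((1 - l) * a + l * b)) ^ 2
        ≤ (1 - l) * D ^ 2 + l * dist (g0 a) (g1 b) ^ 2 - l * (1 - l) * (b - a) ^ 2 * L ^ 2
      ∧ dist (g0 b) (g1 ((1 - l) * a + l * b)) ^ 2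
        ≤ (1 - l) * dist (g1 a) (g0 b) ^ 2 + l * D ^ 2 - l * (1 - l) * (b - a) ^ 2 * L ^ 2 := by
  set τ := (1 - l) * a + l * b with hτdef
  have hτ : τ ∈ Set.Icc (0:ℝ) 1 := combo_mem ha hb hl
  have hg0ab : dist (g0 a) (g0 b) = (b - a) * L := by
    rw [hg0d a ha b hb, abs_of_nonpos (by linarith), neg_sub]
  have hg1ab : dist (g1 a) (g1 b) = (b - a) * L := by
    rw [hg1d a ha b hb, abs_of_nonpos (by linarith), neg_sub]
  refine ⟨?_, ?_, ?_⟩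
  · have h := hNPC (g0 a) (g0 b) (g1 τ) l hl
    rw [hg0i a ha b hb l hl, ← hτdef, hg0ab, hparD τ hτ] at h
    nlinarith [h]
  · have h := hNPC (g1 a) (g1 b) (g0 a) l hl
    rw [hg1i a ha b hb l hl, ← hτdef, hg1ab, dist_comm (g1 a) (g0 a),
      hparD a ha, dist_comm (g1 b) (g0 a), dist_comm (g1 τ) (g0 a)] at h
    nlinarith [h]
  · have h := hNPC (g1 a) (g1 b) (g0 b) l hl
    rw [hg1i a ha b hb l hl, ← hτdef, hg1ab, dist_comm (g1 b) (g0 b),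
      hparD b hb, dist_comm (g1 τ) (g0 b)] at h
    nlinarith [h]

-- equality of sum of squared diagonals
include hNPC hg0d hg1d hg0i hg1i hparD in
private lemma S2 {a b : ℝ} (ha : a ∈ Set.Icc (0:ℝ) 1) (hb : b ∈ Set.Icc (0:ℝ) 1)
    (hab : a ≤ b) :
    dist (g0 a) (g1 b) ^ 2 + dist (g1 a) (g0 b) ^ 2 = 2 * D ^ 2 + 2 * (b - a) ^ 2 * L ^ 2 := by
  have hup := S1 hNPC g0 g1 L D hg0d hg1d hparD ha hb hab
  obtain ⟨i1, i2, i3⟩ := chain hNPC g0 g1 L D hg0d hg1d hg0i hg1i hparD ha hb hab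
    (l := 1/2) (by norm_num)
  linarith


-- exact formulas for partial diagonals (equality in convexity)
include hNPC hg0d hg1d hg0i hg1i hparD in
private lemma S3both {a b l : ℝ} (ha : a ∈ Set.Icc (0:ℝ) 1) (hb : b ∈ Set.Icc (0:ℝ) 1)
    (hab : a ≤ b) (hl : l ∈ Set.Icc (0:ℝ) 1) :
    dist (g0 a) (g1 ((1 - l) * a + l * b)) ^ 2
        = (1 - l) * D ^ 2 + l * dist (g0 a) (g1 b) ^ 2 - l * (1 - l) * (b - a) ^ 2 * L ^ 2
      ∧ dist (g0 b) (g1 ((1 - l) * a + l * b)) ^ 2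
        = (1 - l) * dist (g1 a) (g0 b) ^ 2 + l * D ^ 2 - l * (1 - l) * (b - a) ^ 2 * L ^ 2 := by
  rcases eq_or_lt_of_le hl.1 with h0l | h0l
  · constructor
    · rw [← h0l]; norm_num
      rw [hparD a ha]
    · rw [← h0l]; norm_num
      rw [dist_comm (g0 b) (g1 a)]
  rcases eq_or_lt_of_le hl.2 with h1l | h1l
  · constructor
    · rw [h1l]; norm_num
    · rw [h1l]; norm_num
      rw [hparD b hb]
  obtain ⟨i1, i2, i3⟩ := chain hNPC g0 g1 L D hg0d hg1d hg0i hg1i hparD ha hb hab hl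
  have hS2 := S2 hNPC g0 g1 L D hg0d hg1d hg0i hg1i hparD ha hb hab
  have key : (1 - l) * ((1 - l) * D ^ 2 + l * dist (g0 a) (g1 b) ^ 2
        - l * (1 - l) * (b - a) ^ 2 * L ^ 2)
      + l * ((1 - l) * dist (g1 a) (g0 b) ^ 2 + l * D ^ 2
        - l * (1 - l) * (b - a) ^ 2 * L ^ 2)
      - l * (1 - l) * (b - a) ^ 2 * L ^ 2 = D ^ 2 := by
    linear_combination (l * (1 - l)) * hS2
  have hX : (1 - l) * ((1 - l) * D ^ 2 + l * dist (g0 a) (g1 b) ^ 2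
      - l * (1 - l) * (b - a) ^ 2 * L ^ 2)
      ≤ (1 - l) * dist (g0 a) (g1 ((1 - l) * a + l * b)) ^ 2 := by
    linarith [i1, key, mul_le_mul_of_nonneg_left i3 hl.1]
  have hY : l * ((1 - l) * dist (g1 a) (g0 b) ^ 2 + l * D ^ 2
      - l * (1 - l) * (b - a) ^ 2 * L ^ 2)
      ≤ l * dist (g0 b) (g1 ((1 - l) * a + l * b)) ^ 2 := by
    linarith [i1, key, mul_le_mul_of_nonneg_left i2 (by linarith [hl.2] : (0:ℝ) ≤ 1 - l)]
  constructor
  · exact le_antisymm i2 (le_of_mul_le_mul_left hX (by linarith))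
  · exact le_antisymm i3 (le_of_mul_le_mul_left hY h0l)

-- the global quadratic formula for diagonals
include hNPC hg0d hg1d hg0i hg1i hparD in
private lemma S4 {a b : ℝ} (ha : a ∈ Set.Icc (0:ℝ) 1) (hb : b ∈ Set.Icc (0:ℝ) 1)
    (hab : a ≤ b) :
    dist (g0 a) (g1 b) ^ 2
        = D ^ 2 + (dist (g0 0) (g1 1) ^ 2 - D ^ 2 - L ^ 2) * (b - a) + (b - a) ^ 2 * L ^ 2
      ∧ dist (g1 a) (g0 b) ^ 2
        = D ^ 2 - (dist (g0 0) (g1 1) ^ 2 - D ^ 2 - L ^ 2) * (b - a) + (b - a) ^ 2 * L ^ 2 := by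
  have m0 : (0:ℝ) ∈ Set.Icc (0:ℝ) 1 := by norm_num
  have m1 : (1:ℝ) ∈ Set.Icc (0:ℝ) 1 := by norm_num
  set c₀ := dist (g0 0) (g1 1) ^ 2 - D ^ 2 - L ^ 2 with hc₀
  have hS201 := S2 hNPC g0 g1 L D hg0d hg1d hg0i hg1i hparD m0 m1 (by norm_num)
  have he'01 : dist (g1 0) (g0 1) ^ 2 = D ^ 2 + L ^ 2 - c₀ := by
    rw [hc₀]; nlinarith [hS201]
  -- e'(a,1)^2
  have hF' := (S3both hNPC g0 g1 L D hg0d hg1d hg0i hg1i hparD m0 m1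
    (by norm_num) ha).2
  rw [show (1 - a) * 0 + a * 1 = a by ring] at hF'
  have he'a1 : dist (g1 a) (g0 1) ^ 2 = D ^ 2 - c₀ * (1 - a) + (1 - a) ^ 2 * L ^ 2 := by
    rw [dist_comm (g1 a) (g0 1)]
    rw [he'01] at hF'
    rw [hF']; ring
  have hS2a1 := S2 hNPC g0 g1 L D hg0d hg1d hg0i hg1i hparD ha m1 ha.2
  have hea1 : dist (g0 a) (g1 1) ^ 2 = D ^ 2 + c₀ * (1 - a) + (1 - a) ^ 2 * L ^ 2 := by
    nlinarith [hS2a1, he'a1]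
  have hmain : dist (g0 a) (g1 b) ^ 2 = D ^ 2 + c₀ * (b - a) + (b - a) ^ 2 * L ^ 2 := by
    rcases eq_or_lt_of_le ha.2 with ha1 | ha1
    · have hb1 : b = 1 := le_antisymm hb.2 (ha1 ▸ hab)
      rw [ha1, hb1, hparD 1 m1]; ring
    · set l := (b - a) / (1 - a) with hldef
      have h1a : (0:ℝ) < 1 - a := by linarith
      have hlmem : l ∈ Set.Icc (0:ℝ) 1 := by
        constructor
        · exact div_nonneg (by linarith) (by linarith)
        · rw [div_le_one h1a]; linarith [hb.2]
      have hl1a : l * (1 - a) = b - a := by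
        rw [hldef]; field_simp
      have hF := (S3both hNPC g0 g1 L D hg0d hg1d hg0i hg1i hparD ha m1
        ha.2 hlmem).1
      have harg : (1 - l) * a + l * 1 = b := by nlinarith [hl1a]
      rw [harg, hea1] at hF
      rw [hF]
      linear_combination (c₀ + ((b - a) + l * (1 - a)) * L ^ 2) * hl1a
  have hS2ab := S2 hNPC g0 g1 L D hg0d hg1d hg0i hg1i hparD ha hb hab
  exact ⟨hmain, by nlinarith [hS2ab, hmain]⟩


-- identification of points on diagonals with points on vertical segments
include h0 h1 hgeo hNPC hg0i hg1i hparD in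
private lemma S5 {a b l : ℝ} (ha : a ∈ Set.Icc (0:ℝ) 1) (hb : b ∈ Set.Icc (0:ℝ) 1)
    (hab : a ≤ b) (hl : l ∈ Set.Icc (0:ℝ) 1) :
    I (g0 a) (g1 b) l
      = I (g0 ((1 - l) * a + l * b)) (g1 ((1 - l) * a + l * b)) l := by
  set τ := (1 - l) * a + l * b with hτdef
  have hτ : τ ∈ Set.Icc (0:ℝ) 1 := combo_mem ha hb hl
  have htop : dist (g0 τ) (I (g0 a) (g1 b) l) ≤ l * D := by
    have h := contract_start h0 h1 hgeo hNPC (g0 a) (g0 b) (g1 b) hl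
    rw [hg0i a ha b hb l hl, ← hτdef, hparD b hb] at h
    exact h
  have hbot : dist (I (g0 a) (g1 b) l) (g1 τ) ≤ (1 - l) * D := by
    have h := contract_end h0 h1 hgeo hNPC (g0 a) (g1 a) (g1 b) hl
    rw [hg1i a ha b hb l hl, ← hτdef, hparD a ha] at h
    exact h
  have htri : D ≤ dist (g0 τ) (I (g0 a) (g1 b) l) + dist (I (g0 a) (g1 b) l) (g1 τ) := by
    rw [← hparD τ hτ]; exact dist_triangle _ _ _
  have htop' : dist (g0 τ) (I (g0 a) (g1 b) l) = l * D := by linarith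
  have hbot' : dist (I (g0 a) (g1 b) l) (g1 τ) = (1 - l) * D := by linarith
  refine (uniq hNPC hl ?_ ?_).symm
  · rw [hparD τ hτ]; exact htop'
  · rw [hparD τ hτ]; exact hbot'

-- upper bound on distance between points of the interpolated family
include h0 h1 hgeo hNPC hg0d hg1d in
private lemma S6 {σ t t' : ℝ} (hσ : σ ∈ Set.Icc (0:ℝ) 1) (ht : t ∈ Set.Icc (0:ℝ) 1)
    (ht' : t' ∈ Set.Icc (0:ℝ) 1) :
    dist (I (g0 t) (g1 t) σ) (I (g0 t') (g1 t') σ) ≤ |t - t'| * L := by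
  have h := joint_contract h0 h1 hgeo hNPC (g0 t) (g1 t) (g0 t') (g1 t') hσ
  rw [hg0d t ht t' ht', hg1d t ht t' ht'] at h
  calc dist (I (g0 t) (g1 t) σ) (I (g0 t') (g1 t') σ)
      ≤ (1 - σ) * (|t - t'| * L) + σ * (|t - t'| * L) := h
    _ = |t - t'| * L := by ring

-- the local equality (σ in lower half, away from the left and right ends)
include h0 h1 hgeo hNPC hg0d hg1d hg0i hg1i hparD in
set_option maxHeartbeats 1000000 in
private lemma S7 {σ t t' : ℝ} (hσ0 : 0 ≤ σ) (hσh : σ ≤ 1/2)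
    (ht : t ∈ Set.Icc (0:ℝ) 1) (ht' : t' ∈ Set.Icc (0:ℝ) 1) (htt' : t ≤ t')
    (hfit1 : 2 * (t' - t) ≤ t) (hfit2 : t' + (t' - t) ≤ 1) :
    dist (I (g0 t) (g1 t) σ) (I (g0 t') (g1 t') σ) = (t' - t) * L := by
  have hσ : σ ∈ Set.Icc (0:ℝ) 1 := ⟨hσ0, by linarith⟩
  rcases eq_or_lt_of_le htt' with heq | hlt
  · rw [← heq, dist_self]; ring
  have hσ1 : (0:ℝ) < 1 - σ := by linarith
  obtain ⟨ξ, hξ⟩ : ∃ x : ℝ, 2 * x = 1 - σ := ⟨(1 - σ)/2, by ring⟩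
  have hξpos : 0 < ξ := by linarith
  obtain ⟨w₂, hkey⟩ : ∃ x : ℝ, (1 - σ) * x = t' - t :=
    ⟨(t' - t)/(1 - σ), by field_simp⟩
  have hw₂pos : 0 < w₂ := by nlinarith
  obtain ⟨w₁, hw₁⟩ : ∃ x : ℝ, x = 2 * w₂ := ⟨_, rfl⟩
  obtain ⟨a₁, ha₁⟩ : ∃ x : ℝ, x = t - σ * w₁ := ⟨_, rfl⟩
  obtain ⟨b₁, hb₁⟩ : ∃ x : ℝ, x = a₁ + w₁ := ⟨_, rfl⟩
  obtain ⟨a₂, ha₂⟩ : ∃ x : ℝ, x = t - σ * w₂ := ⟨_, rfl⟩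
  obtain ⟨b₂, hb₂⟩ : ∃ x : ℝ, x = a₂ + w₂ := ⟨_, rfl⟩
  have hξw₁ : ξ * w₁ = t' - t := by linear_combination ξ * hw₁ + w₂ * hξ + hkey
  have h2ξw₂ : 2 * ξ * w₂ = t' - t := by linear_combination w₂ * hξ + hkey
  have hσw₂ : σ * w₂ ≤ t' - t := by nlinarith [hkey, mul_nonneg (by linarith : (0:ℝ) ≤ 1 - 2*σ) hw₂pos.le]
  have ha₁0 : 0 ≤ a₁ := by rw [ha₁, hw₁]; linarith
  have hb₂t' : b₂ = t' := by rw [hb₂, ha₂]; linarith [hkey]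
  have hb₁1 : b₁ ≤ 1 := by rw [hb₁, ha₁, hw₁]; linarith [hkey]
  have ha₁b₁ : a₁ ≤ b₁ := by rw [hb₁, hw₁]; linarith
  have ha₂b₂ : a₂ ≤ b₂ := by rw [hb₂]; linarith
  have ha₁m : a₁ ∈ Set.Icc (0:ℝ) 1 := ⟨ha₁0, by linarith⟩
  have hb₁m : b₁ ∈ Set.Icc (0:ℝ) 1 := ⟨by linarith, hb₁1⟩
  have ha₂0 : 0 ≤ a₂ := by rw [ha₂]; linarith
  have ha₂m : a₂ ∈ Set.Icc (0:ℝ) 1 := ⟨ha₂0, by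
    have := ht'.2
    rw [hb₂t'] at ha₂b₂; linarith⟩
  have hb₂m : b₂ ∈ Set.Icc (0:ℝ) 1 := by rw [hb₂t']; exact ht'
  have hσξ : σ + ξ ∈ Set.Icc (0:ℝ) 1 := ⟨by linarith, by linarith⟩
  -- identification of the four relevant points
  have hid1a : (1 - σ) * a₁ + σ * b₁ = t := by linear_combination ha₁ + σ * hb₁
  have hid1b : (1 - (σ + ξ)) * a₁ + (σ + ξ) * b₁ = t' := by
    linear_combination ha₁ + (σ + ξ) * hb₁ + hξw₁
  have hd1 : dist (I (g0 t) (g1 t) σ) (I (g0 t') (g1 t') (σ + ξ))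
      = ξ * dist (g0 a₁) (g1 b₁) := by
    have e1 := S5 h0 h1 hgeo hNPC g0 g1 D hg0i hg1i hparD ha₁m hb₁m ha₁b₁ hσ
    rw [hid1a] at e1
    have e2 := S5 h0 h1 hgeo hNPC g0 g1 D hg0i hg1i hparD ha₁m hb₁m ha₁b₁ hσξ
    rw [hid1b] at e2
    rw [← e1, ← e2, hgeo (g0 a₁) (g1 b₁) σ hσ (σ + ξ) hσξ,
      show σ - (σ + ξ) = -ξ by ring, abs_neg, abs_of_pos hξpos]
  have hid2a : (1 - σ) * a₂ + σ * b₂ = t := by linear_combination ha₂ + σ * hb₂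
  have hd2 : dist (I (g0 t) (g1 t) σ) (g1 t') = 2 * ξ * dist (g0 a₂) (g1 b₂) := by
    have e1 := S5 h0 h1 hgeo hNPC g0 g1 D hg0i hg1i hparD ha₂m hb₂m ha₂b₂ hσ
    rw [hid2a] at e1
    have e2 : I (g0 a₂) (g1 b₂) 1 = g1 t' := by rw [h1, hb₂t']
    rw [← e1, ← e2, hgeo (g0 a₂) (g1 b₂) σ hσ 1 (by norm_num),
      abs_of_nonpos (by linarith [hσ.2] : σ - 1 ≤ 0),
      show -(σ - 1) = 2 * ξ by linarith]
  -- vertical midpoint relation on the fiber over t'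
  have hvmid : I (I (g0 t') (g1 t') σ) (I (g0 t') (g1 t') 1) (1/2)
      = I (g0 t') (g1 t') (σ + ξ) := by
    rw [interp_interp h0 h1 hgeo hNPC (g0 t') (g1 t') hσ (by norm_num) (by norm_num)]
    congr 1
    linarith
  have hvd' : dist (I (g0 t') (g1 t') σ) (g1 t') = 2 * ξ * D := by
    have h := hgeo (g0 t') (g1 t') σ hσ 1 (by norm_num)
    rw [h1] at h
    rw [h, abs_of_nonpos (by linarith [hσ.2] : σ - 1 ≤ 0), hparD t' ht',
      show -(σ - 1) = 2 * ξ by linarith]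
  -- NPC inequality
  have hN := hNPC (I (g0 t') (g1 t') σ) (I (g0 t') (g1 t') 1) (I (g0 t) (g1 t) σ)
    (1/2) (by norm_num)
  rw [hvmid, h1] at hN
  rw [dist_comm (I (g0 t') (g1 t') (σ + ξ)) (I (g0 t) (g1 t) σ), hd1] at hN
  rw [dist_comm (I (g0 t') (g1 t') σ) (I (g0 t) (g1 t) σ)] at hN
  rw [dist_comm (g1 t') (I (g0 t) (g1 t) σ), hd2] at hN
  have hvd2 : dist (I (g0 t') (g1 t') σ) (g1 t') ^ 2 = (2 * ξ * D) ^ 2 := by rw [hvd']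
  rw [hvd'] at hN
  -- plug the diagonal formulas
  have hS4₁ := (S4 hNPC g0 g1 L D hg0d hg1d hg0i hg1i hparD ha₁m hb₁m ha₁b₁).1
  have hS4₂ := (S4 hNPC g0 g1 L D hg0d hg1d hg0i hg1i hparD ha₂m hb₂m ha₂b₂).1
  have hb₁a₁ : b₁ - a₁ = w₁ := by rw [hb₁]; ring
  have hb₂a₂ : b₂ - a₂ = w₂ := by rw [hb₂]; ring
  rw [hb₁a₁] at hS4₁
  rw [hb₂a₂] at hS4₂
  have hA : (ξ * dist (g0 a₁) (g1 b₁)) ^ 2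
      = ξ ^ 2 * D ^ 2 + (dist (g0 0) (g1 1) ^ 2 - D ^ 2 - L ^ 2) * ξ * (t' - t)
        + (t' - t) ^ 2 * L ^ 2 := by
    linear_combination ξ ^ 2 * hS4₁
      + ((dist (g0 0) (g1 1) ^ 2 - D ^ 2 - L ^ 2) * ξ + ((t' - t) + ξ * w₁) * L ^ 2) * hξw₁
  have hB : (2 * ξ * dist (g0 a₂) (g1 b₂)) ^ 2
      = 4 * ξ ^ 2 * D ^ 2 + 2 * (dist (g0 0) (g1 1) ^ 2 - D ^ 2 - L ^ 2) * ξ * (t' - t)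
        + (t' - t) ^ 2 * L ^ 2 := by
    linear_combination 4 * ξ ^ 2 * hS4₂
      + (2 * (dist (g0 0) (g1 1) ^ 2 - D ^ 2 - L ^ 2) * ξ + ((t' - t) + 2 * ξ * w₂) * L ^ 2) * h2ξw₂
  have hlow : ((t' - t) * L) ^ 2 ≤ dist (I (g0 t) (g1 t) σ) (I (g0 t') (g1 t') σ) ^ 2 := by
    linarith only [hN, hA, hB]
  have hup := S6 h0 h1 hgeo hNPC g0 g1 L hg0d hg1d hσ ht ht'
  have habs : |t - t'| = t' - t := by rw [abs_sub_comm, abs_of_pos (by linarith : 0 < t' - t)]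
  rw [habs] at hup
  have hL0 : 0 ≤ L := by
    have h := dist_nonneg (x := g0 t) (y := g0 t')
    rw [hg0d t ht t' ht', habs] at h
    by_contra hc
    push_neg at hc
    have h2 := mul_neg_of_pos_of_neg (show 0 < t' - t by linarith only [hlt]) hc
    linarith only [h, h2]
  refine le_antisymm hup ?_
  exact le_of_sq_le' (mul_nonneg (by linarith only [hlt]) hL0) dist_nonneg hlow

end Strip
end Aux

/-- Flat quadrilateral construction of interpolated parallel segments in a CAT(0)
space: if the segments from `Q₀` to `P₀` and from `Q₁` to `P₁` have the same length
`L` and are parallel, then the interpolated segments from `Q_s = (1-s)Q₀ + sQ₁` to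
`P_s = (1-s)P₀ + sP₁` have length `L` and are pairwise parallel. -/
theorem stmt_9 {X : Type*} [MetricSpace X] [CompleteSpace X]
    (interp : X → X → ℝ → X)
    (h0 : ∀ P Q, interp P Q 0 = P) (h1 : ∀ P Q, interp P Q 1 = Q)
    (hgeo : ∀ P Q, ∀ s ∈ Set.Icc (0:ℝ) 1, ∀ t ∈ Set.Icc (0:ℝ) 1,
      dist (interp P Q s) (interp P Q t) = |s - t| * dist P Q)
    (hNPC : ∀ P Q R, ∀ s ∈ Set.Icc (0:ℝ) 1,
      dist (interp P Q s) R ^ 2 ≤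
        (1 - s) * dist P R ^ 2 + s * dist Q R ^ 2 - s * (1 - s) * dist P Q ^ 2)
    (Q₀ Q₁ P₀ P₁ : X) (L : ℝ)
    (hL0 : dist Q₀ P₀ = L) (hL1 : dist Q₁ P₁ = L)
    (hpar : ∀ t ∈ Set.Icc (0:ℝ) 1,
      dist (interp Q₀ P₀ t) (interp Q₁ P₁ t) = dist Q₀ Q₁) :
    (∀ s ∈ Set.Icc (0:ℝ) 1,
      dist (interp Q₀ Q₁ s) (interp P₀ P₁ s) = L) ∧
    (∀ s ∈ Set.Icc (0:ℝ) 1, ∀ s' ∈ Set.Icc (0:ℝ) 1, ∀ t ∈ Set.Icc (0:ℝ) 1,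
      dist (interp (interp Q₀ Q₁ s) (interp P₀ P₁ s) t)
           (interp (interp Q₀ Q₁ s') (interp P₀ P₁ s') t) =
        dist (interp Q₀ Q₁ s) (interp Q₀ Q₁ s')) := by
  have m0 : (0:ℝ) ∈ Set.Icc (0:ℝ) 1 := by norm_num
  have m1 : (1:ℝ) ∈ Set.Icc (0:ℝ) 1 := by norm_num
  have hL : 0 ≤ L := hL0 ▸ dist_nonneg
  -- strip data
  have hg0d : ∀ a ∈ Set.Icc (0:ℝ) 1, ∀ b ∈ Set.Icc (0:ℝ) 1,
      dist (interp Q₀ P₀ a) (interp Q₀ P₀ b) = |a - b| * L := by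
    intro a ha b hb; rw [hgeo Q₀ P₀ a ha b hb, hL0]
  have hg1d : ∀ a ∈ Set.Icc (0:ℝ) 1, ∀ b ∈ Set.Icc (0:ℝ) 1,
      dist (interp Q₁ P₁ a) (interp Q₁ P₁ b) = |a - b| * L := by
    intro a ha b hb; rw [hgeo Q₁ P₁ a ha b hb, hL1]
  have hg0i : ∀ a ∈ Set.Icc (0:ℝ) 1, ∀ b ∈ Set.Icc (0:ℝ) 1, ∀ l ∈ Set.Icc (0:ℝ) 1,
      interp (interp Q₀ P₀ a) (interp Q₀ P₀ b) l = interp Q₀ P₀ ((1 - l) * a + l * b) :=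
    fun a ha b hb l hl => interp_interp h0 h1 hgeo hNPC Q₀ P₀ ha hb hl
  have hg1i : ∀ a ∈ Set.Icc (0:ℝ) 1, ∀ b ∈ Set.Icc (0:ℝ) 1, ∀ l ∈ Set.Icc (0:ℝ) 1,
      interp (interp Q₁ P₁ a) (interp Q₁ P₁ b) l = interp Q₁ P₁ ((1 - l) * a + l * b) :=
    fun a ha b hb l hl => interp_interp h0 h1 hgeo hNPC Q₁ P₁ ha hb hl
  have hpar' : ∀ t ∈ Set.Icc (0:ℝ) 1,
      dist (interp Q₁ P₁ t) (interp Q₀ P₀ t) = dist Q₀ Q₁ := by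
    intro t ht; rw [dist_comm]; exact hpar t ht
  -- local equality for all levels
  have localEq : ∀ σ ∈ Set.Icc (0:ℝ) 1, ∀ t ∈ Set.Icc (0:ℝ) 1, ∀ t' ∈ Set.Icc (0:ℝ) 1,
      t ≤ t' → 2 * (t' - t) ≤ t → t' + (t' - t) ≤ 1 →
      dist (interp (interp Q₀ P₀ t) (interp Q₁ P₁ t) σ)
        (interp (interp Q₀ P₀ t') (interp Q₁ P₁ t') σ) = (t' - t) * L := by
    intro σ hσ t ht t' ht' htt' hf1 hf2
    rcases le_or_gt σ (1/2) with hhalf | hhalf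
    · exact S7 h0 h1 hgeo hNPC (fun u => interp Q₀ P₀ u) (fun u => interp Q₁ P₁ u)
        L (dist Q₀ Q₁) hg0d hg1d hg0i hg1i hpar hσ.1 hhalf ht ht' htt' hf1 hf2
    · have h := S7 h0 h1 hgeo hNPC (fun u => interp Q₁ P₁ u) (fun u => interp Q₀ P₀ u)
        L (dist Q₀ Q₁) hg1d hg0d hg1i hg0i hpar'
        (by linarith [hσ.2] : 0 ≤ 1 - σ) (by linarith : 1 - σ ≤ 1/2) ht ht' htt' hf1 hf2
      rw [← interp_symm h0 h1 hgeo hNPC (interp Q₀ P₀ t) (interp Q₁ P₁ t) hσ,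
        ← interp_symm h0 h1 hgeo hNPC (interp Q₀ P₀ t') (interp Q₁ P₁ t') hσ] at h
      exact h
  -- upper bound
  have upper : ∀ σ ∈ Set.Icc (0:ℝ) 1, ∀ t ∈ Set.Icc (0:ℝ) 1, ∀ t' ∈ Set.Icc (0:ℝ) 1,
      dist (interp (interp Q₀ P₀ t) (interp Q₁ P₁ t) σ)
        (interp (interp Q₀ P₀ t') (interp Q₁ P₁ t') σ) ≤ |t - t'| * L := by
    intro σ hσ t ht t' ht'
    exact S6 h0 h1 hgeo hNPC (fun u => interp Q₀ P₀ u) (fun u => interp Q₁ P₁ u)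
      L hg0d hg1d hσ ht ht'
  -- full equality
  have main : ∀ σ ∈ Set.Icc (0:ℝ) 1, ∀ t ∈ Set.Icc (0:ℝ) 1, ∀ t' ∈ Set.Icc (0:ℝ) 1,
      t ≤ t' →
      dist (interp (interp Q₀ P₀ t) (interp Q₁ P₁ t) σ)
        (interp (interp Q₀ P₀ t') (interp Q₁ P₁ t') σ) = (t' - t) * L := by
    have interior : ∀ σ ∈ Set.Icc (0:ℝ) 1, ∀ t t' : ℝ, 0 < t → t ≤ t' → t' < 1 →
        dist (interp (interp Q₀ P₀ t) (interp Q₁ P₁ t) σ)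
          (interp (interp Q₀ P₀ t') (interp Q₁ P₁ t') σ) = (t' - t) * L := by
      intro σ hσ t t' ht0 htt' ht1
      have ht : t ∈ Set.Icc (0:ℝ) 1 := ⟨ht0.le, by linarith⟩
      have ht' : t' ∈ Set.Icc (0:ℝ) 1 := ⟨by linarith, ht1.le⟩
      obtain ⟨r0, hr0def⟩ : ∃ x : ℝ, x = min (t/2) (1 - t') := ⟨_, rfl⟩
      have hr0pos : 0 < r0 := by
        rw [hr0def]; apply lt_min (by linarith) (by linarith)
      have hr0t : r0 ≤ t/2 := hr0def ▸ min_le_left _ _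
      have hr0t' : r0 ≤ 1 - t' := hr0def ▸ min_le_right _ _
      have ind : ∀ n : ℕ, ∀ u v : ℝ, t ≤ u → u ≤ v → v ≤ t' →
          v - u ≤ (3/2)^n * r0 →
          dist (interp (interp Q₀ P₀ u) (interp Q₁ P₁ u) σ)
            (interp (interp Q₀ P₀ v) (interp Q₁ P₁ v) σ) = (v - u) * L := by
        intro n
        induction n with
        | zero =>
          intro u v h1 h2 h3 h4
          rw [pow_zero, one_mul] at h4
          have hu : u ∈ Set.Icc (0:ℝ) 1 := ⟨by linarith, by linarith⟩
          have hv : v ∈ Set.Icc (0:ℝ) 1 := ⟨by linarith, by linarith⟩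
          exact localEq σ hσ u hu v hv h2 (by linarith) (by linarith)
        | succ n ih =>
          intro u v h1 h2 h3 h4
          rcases le_or_gt (v - u) ((3/2)^n * r0) with hsmall | hbig
          · exact ih u v h1 h2 h3 hsmall
          · obtain ⟨d, hd⟩ : ∃ x : ℝ, x = (v - u)/3 := ⟨_, rfl⟩
            have h3d : 3 * d = v - u := by rw [hd]; ring
            have hpow : ((3:ℝ)/2)^(n+1) = (3/2)^n * (3/2) := pow_succ _ _
            have hpown : (0:ℝ) < (3/2)^n := by positivity
            have hdpos : 0 < d := by nlinarith
            have h2d : 2 * d ≤ (3/2)^n * r0 := by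
              rw [hpow] at h4; linarith
            have e01 := ih u (u + d) h1 (by linarith) (by linarith) (by linarith)
            have e12 := ih (u + d) (u + 2*d) (by linarith) (by linarith)
              (by linarith) (by linarith)
            have e23 := ih (u + 2*d) v (by linarith) (by linarith) h3 (by linarith)
            have e02 := ih u (u + 2*d) h1 (by linarith) (by linarith) (by linarith)
            have e13 := ih (u + d) v (by linarith) (by linarith) h3 (by linarith)
            rw [show u + d - u = d by ring] at e01
            rw [show u + 2*d - (u + d) = d by ring] at e12
            rw [show v - (u + 2*d) = d by linarith] at e23
            rw [show u + 2*d - u = 2*d by ring] at e02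
            rw [show v - (u + d) = 2*d by linarith] at e13
            have hu : u ∈ Set.Icc (0:ℝ) 1 := ⟨by linarith, by linarith⟩
            have hv : v ∈ Set.Icc (0:ℝ) 1 := ⟨by linarith, by linarith⟩
            have dle : dist (interp (interp Q₀ P₀ u) (interp Q₁ P₁ u) σ)
                (interp (interp Q₀ P₀ v) (interp Q₁ P₁ v) σ) ≤ 3 * (d * L) := by
              have h := upper σ hσ u hu v hv
              rw [abs_sub_comm, abs_of_nonneg (by linarith : (0:ℝ) ≤ v - u)] at h
              calc dist _ _ ≤ (v - u) * L := h
                _ = 3 * (d * L) := by rw [← h3d]; ring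
            have hres := ext_step hNPC
              (interp (interp Q₀ P₀ u) (interp Q₁ P₁ u) σ)
              (interp (interp Q₀ P₀ (u + d)) (interp Q₁ P₁ (u + d)) σ)
              (interp (interp Q₀ P₀ (u + 2*d)) (interp Q₁ P₁ (u + 2*d)) σ)
              (interp (interp Q₀ P₀ v) (interp Q₁ P₁ v) σ)
              (mul_nonneg hdpos.le hL)
              e01 e12 e23
              (by rw [e02]; ring) (by rw [e13]; ring) dle
            rw [hres, ← h3d]; ring
      obtain ⟨n, hn⟩ := pow_unbounded_of_one_lt (R := ℝ) ((t' - t)/r0)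
        (by norm_num : (1:ℝ) < 3/2)
      have hn' : t' - t ≤ (3/2)^n * r0 := by
        rw [div_lt_iff₀ hr0pos] at hn
        linarith
      exact ind n t t' le_rfl htt' le_rfl hn'
    intro σ hσ t ht t' ht' htt'
    have hub := upper σ hσ t ht t' ht'
    rw [abs_sub_comm, abs_of_nonneg (by linarith : (0:ℝ) ≤ t' - t)] at hub
    rcases eq_or_lt_of_le htt' with heq | hlt
    · rw [← heq, dist_self]; ring
    refine le_antisymm hub ?_
    rcases eq_or_lt_of_le hL with hLz | hLpos
    · have h := dist_nonneg (x := interp (interp Q₀ P₀ t) (interp Q₁ P₁ t) σ)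
        (y := interp (interp Q₀ P₀ t') (interp Q₁ P₁ t') σ)
      nlinarith
    by_contra hcon
    push_neg at hcon
    obtain ⟨ε, hεdef⟩ : ∃ x : ℝ, x = min (((t' - t) * L - dist
        (interp (interp Q₀ P₀ t) (interp Q₁ P₁ t) σ)
        (interp (interp Q₀ P₀ t') (interp Q₁ P₁ t') σ)) / (8 * L)) ((t' - t)/4) :=
      ⟨_, rfl⟩
    have hεpos : 0 < ε := by
      rw [hεdef]
      apply lt_min
      · apply div_pos (by linarith) (by linarith)
      · linarith
    have hε1 : ε ≤ ((t' - t) * L - dist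
        (interp (interp Q₀ P₀ t) (interp Q₁ P₁ t) σ)
        (interp (interp Q₀ P₀ t') (interp Q₁ P₁ t') σ)) / (8 * L) :=
      hεdef ▸ min_le_left _ _
    have hε2 : ε ≤ (t' - t)/4 := hεdef ▸ min_le_right _ _
    have hint := interior σ hσ (t + ε) (t' - ε) (by linarith [ht.1]) (by linarith)
      (by linarith [ht'.2])
    have htε : t + ε ∈ Set.Icc (0:ℝ) 1 := ⟨by linarith [ht.1], by linarith [ht'.2]⟩
    have ht'ε : t' - ε ∈ Set.Icc (0:ℝ) 1 := ⟨by linarith [ht.1], by linarith [ht'.2]⟩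
    have htri := dist_triangle4
      (interp (interp Q₀ P₀ (t + ε)) (interp Q₁ P₁ (t + ε)) σ)
      (interp (interp Q₀ P₀ t) (interp Q₁ P₁ t) σ)
      (interp (interp Q₀ P₀ t') (interp Q₁ P₁ t') σ)
      (interp (interp Q₀ P₀ (t' - ε)) (interp Q₁ P₁ (t' - ε)) σ)
    have hub1 := upper σ hσ (t + ε) htε t ht
    rw [show t + ε - t = ε by ring, abs_of_pos hεpos] at hub1
    have hub2 := upper σ hσ t' ht' (t' - ε) ht'ε
    rw [show t' - (t' - ε) = ε by ring, abs_of_pos hεpos] at hub2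
    rw [hint] at htri
    have h8 : ε * (8 * L) ≤ (t' - t) * L - dist
        (interp (interp Q₀ P₀ t) (interp Q₁ P₁ t) σ)
        (interp (interp Q₀ P₀ t') (interp Q₁ P₁ t') σ) :=
      (le_div_iff₀ (by linarith : (0:ℝ) < 8 * L)).mp hε1
    nlinarith [htri, hub1, hub2, h8, hεpos, hLpos]
  -- goal 1
  have goal1 : ∀ s ∈ Set.Icc (0:ℝ) 1,
      dist (interp Q₀ Q₁ s) (interp P₀ P₁ s) = L := by
    intro s hs
    have h := main s hs 0 m0 1 m1 (by norm_num)
    rw [h0 Q₀ P₀, h0 Q₁ P₁, h1 Q₀ P₀, h1 Q₁ P₁] at h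
    simpa using h
  refine ⟨goal1, ?_⟩
  -- goal 2
  intro s hs s' hs' t ht
  have hct : ∀ u, u ∈ Set.Icc (0:ℝ) 1 →
      interp (interp Q₀ Q₁ u) (interp P₀ P₁ u) t
        = interp (interp Q₀ P₀ t) (interp Q₁ P₁ t) u := by
    intro u hu
    apply uniq hNPC ht
    · have h := main u hu 0 m0 t ht ht.1
      rw [h0 Q₀ P₀, h0 Q₁ P₁] at h
      rw [h, goal1 u hu]
      ring
    · have h := main u hu t ht 1 m1 ht.2
      rw [h1 Q₀ P₀, h1 Q₁ P₁] at h
      rw [h, goal1 u hu]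
  rw [hct s hs, hct s' hs',
    hgeo (interp Q₀ P₀ t) (interp Q₁ P₁ t) s hs s' hs', hpar t ht,
    hgeo Q₀ Q₁ s hs s' hs']
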